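/- For any positive integers a, N: S_{a,a,a,a}(N) = (S_a(N)⁴ + 6·S_a(N)²·S_{2a}(N) + 3·S_{2a}(N)² + 8·S_a(N)·S_{3a}(N) + 6·S_{4a}(N))/24. -/

import Mathlib

/-- Nested harmonic sums `S_{a₁,…,a_r}(N)` with positive integer indices. -/
noncomputable def S : List ℕ → ℕ → ℝ
  | [], _ => 1
  | a :: l, N => ∑ n ∈ Finset.Icc 1 N, (1 / (n : ℝ) ^ a) * S l n

lemma S_step (b : ℕ) (l : List ℕ) (N : ℕ) :
    S (b :: l) (N + 1) = S (b :: l) N + 1 / ((N + 1 : ℕ) : ℝ) ^ b * S l (N + 1) := by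
  simp only [S]
  rw [Finset.sum_Icc_succ_top (by omega : 1 ≤ N + 1)]

lemma key (a : ℕ) (N : ℕ) :
    S [a, a] N = (S [a] N ^ 2 + S [2 * a] N) / 2 ∧
    S [a, a, a] N = (S [a] N ^ 3 + 3 * S [a] N * S [2 * a] N + 2 * S [3 * a] N) / 6 ∧
    S [a, a, a, a] N
      = (S [a] N ^ 4 + 6 * S [a] N ^ 2 * S [2 * a] N + 3 * S [2 * a] N ^ 2
          + 8 * S [a] N * S [3 * a] N + 6 * S [4 * a] N) / 24 := by
  induction N with
  | zero => simp [S]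
  | succ N ih =>
    obtain ⟨h2, h3, h4⟩ := ih
    have e1 := S_step a [] N
    have e2 := S_step a [a] N
    have e3 := S_step a [a, a] N
    have e4 := S_step a [a, a, a] N
    have f2 := S_step (2 * a) [] N
    have f3 := S_step (3 * a) [] N
    have f4 := S_step (4 * a) [] N
    have p2 : ((N + 1 : ℕ) : ℝ) ^ (2 * a) = (((N + 1 : ℕ) : ℝ) ^ a) ^ 2 := by
      rw [mul_comm, pow_mul]
    have p3 : ((N + 1 : ℕ) : ℝ) ^ (3 * a) = (((N + 1 : ℕ) : ℝ) ^ a) ^ 3 := by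
      rw [mul_comm, pow_mul]
    have p4 : ((N + 1 : ℕ) : ℝ) ^ (4 * a) = (((N + 1 : ℕ) : ℝ) ^ a) ^ 4 := by
      rw [mul_comm, pow_mul]
    have hS0 : ∀ n, S [] n = 1 := fun n => rfl
    simp only [hS0, mul_one, p2, p3, p4] at e1 e2 e3 e4 f2 f3 f4
    set x := 1 / (((N + 1 : ℕ) : ℝ) ^ a) with hx
    have hx2 : 1 / ((((N + 1 : ℕ) : ℝ) ^ a) ^ 2) = x ^ 2 := by rw [hx]; ring
    have hx3 : 1 / ((((N + 1 : ℕ) : ℝ) ^ a) ^ 3) = x ^ 3 := by rw [hx]; ring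
    have hx4 : 1 / ((((N + 1 : ℕ) : ℝ) ^ a) ^ 4) = x ^ 4 := by rw [hx]; ring
    rw [hx2] at f2; rw [hx3] at f3; rw [hx4] at f4
    rw [e4, e3, e2, e1, f2, f3, f4, h2, h3, h4]
    refine ⟨by ring, by ring, by ring⟩

/-- `S_{a,a,a,a}(N) = (S_a⁴ + 6·S_a²·S_{2a} + 3·S_{2a}² + 8·S_a·S_{3a} + 6·S_{4a})/24`. -/
theorem stmt_4 (a N : ℕ) (ha : 1 ≤ a) (hN : 1 ≤ N) :
    S [a, a, a, a] N
      = (S [a] N ^ 4 + 6 * S [a] N ^ 2 * S [2 * a] N + 3 * S [2 * a] N ^ 2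
          + 8 * S [a] N * S [3 * a] N + 6 * S [4 * a] N) / 24 := by
  exact (key a N).2.2
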